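/- Let R be a commutative ring, d ≥ 2, and let α_1,…,α_d be types. Let E_k : α_k → R for k = 1,…,d, let F : α_1 → R, and for each i = 2,…,d let ρ_i ∈ ℕ be positive and let A_{i,β} : α_{i-1} → R and B_{i,β} : α_i → R for β = 1,…,ρ_i. Define the generalized cascadic sum H(x_1,…,x_d) = F(x_1)·∏_{k=2}^d E_k(x_k) + Σ_{i=2}^d (∏_{k=1}^{i-2} E_k(x_k)) · (Σ_{β=1}^{ρ_i} A_{i,β}(x_{i-1})·B_{i,β}(x_i)) · (∏_{k=i+1}^d E_k(x_k)). Then H admits a TT representation whose rank at position i equals 2 + ρ_{i+1} for i = 1,…,d−1, where ρ_{d+1} := 1. -/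
import Mathlib


open scoped BigOperators

section TTAux

variable {R : Type*} [CommRing R] {n : ℕ} {α : Fin (n + 2) → Type*}

/-- Generic bridge: a path sum for a family of cores equals the sum of the final
state vector, provided `w` satisfies the `vecMul` recurrence. -/
lemma tt_path_sum_invariant {R : Type*} [CommRing R] :
    ∀ (d : ℕ) (rr : Fin (d + 1) → ℕ)
      (M : ∀ i : Fin d, Matrix (Fin (rr i.castSucc)) (Fin (rr i.succ)) R)
      (w : ∀ s : Fin (d + 1), Fin (rr s) → R),
      (∀ (i : Fin d) (b : Fin (rr i.succ)),
        w i.succ b = ∑ a : Fin (rr i.castSucc), w i.castSucc a * M i a b) →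
      ∑ β : ∀ j : Fin (d + 1), Fin (rr j),
          w 0 (β 0) * ∏ i : Fin d, M i (β i.castSucc) (β i.succ)
        = ∑ b : Fin (rr (Fin.last d)), w (Fin.last d) b := by
  intro d
  induction d with
  | zero =>
    intro rr M w hw
    rw [← (Equiv.piUnique (fun j : Fin 1 => Fin (rr j))).symm.sum_comp]
    simp only [Finset.prod_empty, Fin.prod_univ_zero, mul_one]
    exact Finset.sum_congr rfl fun x _ => rfl
  | succ d ih =>
    intro rr M w hw
    rw [← Equiv.sum_comp (Fin.consEquiv (fun j : Fin (d + 2) => Fin (rr j)))]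
    rw [Fintype.sum_prod_type]
    simp only [Fin.consEquiv_apply, Fin.prod_univ_succ, Fin.cons_succ, Fin.castSucc_zero,
      Fin.cons_zero, ← Fin.succ_castSucc, Fin.cons_succ]
    rw [Finset.sum_comm]
    have step : ∀ t : ∀ i : Fin (d + 1), Fin (rr i.succ),
        (∑ x : Fin (rr 0), w 0 x *
          (M 0 x (t 0) * ∏ i : Fin d, M i.succ (t i.castSucc) (t i.succ)))
        = w (Fin.succ 0) (t 0) * ∏ i : Fin d, M i.succ (t i.castSucc) (t i.succ) := by
      intro t
      rw [show w (Fin.succ 0) (t 0) = ∑ a : Fin (rr 0), w 0 a * M 0 a (t 0) from hw 0 (t 0)]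
      rw [Finset.sum_mul]
      exact Finset.sum_congr rfl fun a _ => (mul_assoc _ _ _).symm
    rw [Finset.sum_congr rfl fun t _ => step t]
    exact ih (fun j => rr j.succ) (fun i => M i.succ) (fun s => w s.succ)
      (fun i b => hw i.succ b)

lemma tt_sum_fin_one {M : Type*} [AddCommMonoid M] {t : ℕ} (h : t = 1) (f : Fin t → M) :
    ∑ b, f b = f ⟨0, by omega⟩ := by
  subst h
  exact Fin.sum_univ_one f

lemma tt_sum_fin_split {M : Type*} [AddCommMonoid M] {t m : ℕ} (h : t = 2 + m) (f : Fin t → M) :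
    ∑ b, f b
      = f ⟨0, by omega⟩ + (∑ c : Fin m, f ⟨(c : ℕ) + 1, by omega⟩) + f ⟨m + 1, by omega⟩ := by
  have h' : t = m + 2 := by omega
  subst h'
  rw [Fin.sum_univ_succ, Fin.sum_univ_castSucc]
  rw [← add_assoc]
  rfl

/-- Lifted `B`, taking the position `p = j + 1` and a ℕ-valued component index. -/
def ttB (ρ : Fin (n + 1) → ℕ) (B : ∀ j : Fin (n + 1), Fin (ρ j) → α j.succ → R)
    (p : Fin (n + 2)) (a : ℕ) (xp : α p) : R :=
  if h : 0 < (p : ℕ) then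
    if hb : a < ρ ⟨(p : ℕ) - 1, by omega⟩ then
      B ⟨(p : ℕ) - 1, by omega⟩ ⟨a, hb⟩
        ((show p = (⟨(p : ℕ) - 1, by omega⟩ : Fin (n + 1)).succ from
            Fin.ext (by simp; omega)) ▸ xp)
    else 0
  else 0

/-- Lifted `A`, taking the position `p = j` and a ℕ-valued component index. -/
def ttA (ρ : Fin (n + 1) → ℕ) (A : ∀ j : Fin (n + 1), Fin (ρ j) → α j.castSucc → R)
    (p : Fin (n + 2)) (b : ℕ) (xp : α p) : R :=
  if h : (p : ℕ) < n + 1 then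
    if hb : b < ρ ⟨(p : ℕ), h⟩ then A ⟨(p : ℕ), h⟩ ⟨b, hb⟩ xp else 0
  else 0

lemma ttB_eval (ρ : Fin (n + 1) → ℕ) (B : ∀ j : Fin (n + 1), Fin (ρ j) → α j.succ → R)
    (v : ℕ) (hv : v + 1 < n + 2) (c : ℕ) (hc : c < ρ ⟨v, by omega⟩)
    (xp : α ⟨v + 1, hv⟩) :
    ttB ρ B ⟨v + 1, hv⟩ c xp = B ⟨v, by omega⟩ ⟨c, hc⟩ xp := by
  unfold ttB
  rw [dif_pos (Nat.succ_pos v), dif_pos (show c < ρ ⟨v + 1 - 1, by omega⟩ from hc)]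
  rfl

lemma ttA_eval (ρ : Fin (n + 1) → ℕ) (A : ∀ j : Fin (n + 1), Fin (ρ j) → α j.castSucc → R)
    (v : ℕ) (hv : v < n + 1) (c : ℕ) (hc : c < ρ ⟨v, hv⟩) (xp : α ⟨v, by omega⟩) :
    ttA ρ A (⟨v, by omega⟩ : Fin (n + 2)) c xp = A ⟨v, hv⟩ ⟨c, hc⟩ xp := by
  unfold ttA
  rw [dif_pos (show ((⟨v, by omega⟩ : Fin (n + 2)) : ℕ) < n + 1 from hv)]
  exact dif_pos hc

/-- Partial products of the `E k (x k)` over positions `lo ≤ k < hi`. -/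
def ttP (E : ∀ k : Fin (n + 2), α k → R) (x : ∀ i, α i) (lo hi : ℕ) : R :=
  ∏ k ∈ Finset.univ.filter (fun k : Fin (n + 2) => lo ≤ (k : ℕ) ∧ (k : ℕ) < hi), E k (x k)

lemma ttP_empty (E : ∀ k : Fin (n + 2), α k → R) (x : ∀ i, α i) {lo hi : ℕ} (h : hi ≤ lo) :
    ttP E x lo hi = 1 := by
  unfold ttP
  rw [Finset.filter_false_of_mem (fun k _ => by omega), Finset.prod_empty]

lemma ttP_succ (E : ∀ k : Fin (n + 2), α k → R) (x : ∀ i, α i) {lo s : ℕ}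
    (h1 : lo ≤ s) (h2 : s < n + 2) :
    ttP E x lo (s + 1) = ttP E x lo s * E ⟨s, h2⟩ (x ⟨s, h2⟩) := by
  unfold ttP
  rw [show Finset.univ.filter (fun k : Fin (n + 2) => lo ≤ (k : ℕ) ∧ (k : ℕ) < s + 1)
      = insert (⟨s, h2⟩ : Fin (n + 2))
          (Finset.univ.filter (fun k : Fin (n + 2) => lo ≤ (k : ℕ) ∧ (k : ℕ) < s)) by
    ext k; simp [Fin.ext_iff]; omega]
  rw [Finset.prod_insert (by simp)]
  ring

/-- The accumulated "finished terms" value at separator `s`. -/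
def ttD (E : ∀ k : Fin (n + 2), α k → R) (F : α 0 → R) (ρ : Fin (n + 1) → ℕ)
    (A : ∀ j : Fin (n + 1), Fin (ρ j) → α j.castSucc → R)
    (B : ∀ j : Fin (n + 1), Fin (ρ j) → α j.succ → R) (x : ∀ i, α i) (s : ℕ) : R :=
  F (x 0) * ttP E x 1 s +
    ∑ j ∈ Finset.univ.filter (fun j : Fin (n + 1) => (j : ℕ) + 2 ≤ s),
      ttP E x 0 j * (∑ β : Fin (ρ j), A j β (x j.castSucc) * B j β (x j.succ))
        * ttP E x ((j : ℕ) + 2) s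

lemma ttD_one (E : ∀ k : Fin (n + 2), α k → R) (F : α 0 → R) (ρ : Fin (n + 1) → ℕ)
    (A : ∀ j : Fin (n + 1), Fin (ρ j) → α j.castSucc → R)
    (B : ∀ j : Fin (n + 1), Fin (ρ j) → α j.succ → R) (x : ∀ i, α i) :
    ttD E F ρ A B x 1 = F (x 0) := by
  unfold ttD
  rw [ttP_empty E x le_rfl, Finset.filter_false_of_mem (fun k _ => by omega)]
  simp

lemma ttD_succ (E : ∀ k : Fin (n + 2), α k → R) (F : α 0 → R) (ρ : Fin (n + 1) → ℕ)
    (A : ∀ j : Fin (n + 1), Fin (ρ j) → α j.castSucc → R)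
    (B : ∀ j : Fin (n + 1), Fin (ρ j) → α j.succ → R) (x : ∀ i, α i) {s : ℕ}
    (h1 : 1 ≤ s) (h2 : s ≤ n + 1) :
    ttD E F ρ A B x (s + 1)
      = ttD E F ρ A B x s * E ⟨s, by omega⟩ (x ⟨s, by omega⟩)
        + ttP E x 0 (s - 1) *
            (∑ β : Fin (ρ ⟨s - 1, by omega⟩),
              A ⟨s - 1, by omega⟩ β (x (Fin.castSucc ⟨s - 1, by omega⟩))
              * B ⟨s - 1, by omega⟩ β (x (Fin.succ (⟨s - 1, by omega⟩ : Fin (n + 1))))) := by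
  unfold ttD
  rw [ttP_succ E x h1 (by omega)]
  rw [show Finset.univ.filter (fun j : Fin (n + 1) => (j : ℕ) + 2 ≤ s + 1)
      = insert (⟨s - 1, by omega⟩ : Fin (n + 1))
          (Finset.univ.filter (fun j : Fin (n + 1) => (j : ℕ) + 2 ≤ s)) by
    ext j; simp [Fin.ext_iff]; omega]
  rw [Finset.sum_insert (by simp; omega)]
  have hnew : ttP E x (((⟨s - 1, by omega⟩ : Fin (n + 1)) : ℕ) + 2) (s + 1) = 1 :=
    ttP_empty _ _ (by simp; omega)
  rw [hnew]
  have hsum : ∀ j ∈ Finset.univ.filter (fun j : Fin (n + 1) => (j : ℕ) + 2 ≤ s),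
      ttP E x 0 j * (∑ β : Fin (ρ j), A j β (x j.castSucc) * B j β (x j.succ))
          * ttP E x ((j : ℕ) + 2) (s + 1)
        = ttP E x 0 j * (∑ β : Fin (ρ j), A j β (x j.castSucc) * B j β (x j.succ))
          * ttP E x ((j : ℕ) + 2) s * E ⟨s, by omega⟩ (x ⟨s, by omega⟩) := by
    intro j hj
    simp only [Finset.mem_filter] at hj
    rw [ttP_succ E x (by omega) (by omega)]
    ring
  rw [Finset.sum_congr rfl hsum, ← Finset.sum_mul]
  ring

/-- The TT cores for the generalized cascadic sum, with ℕ-valued matrix indices. -/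
def ttG (E : ∀ k : Fin (n + 2), α k → R) (F : α 0 → R) (ρ : Fin (n + 1) → ℕ)
    (A : ∀ j : Fin (n + 1), Fin (ρ j) → α j.castSucc → R)
    (B : ∀ j : Fin (n + 1), Fin (ρ j) → α j.succ → R)
    (p : Fin (n + 2)) (xp : α p) (a b : ℕ) : R :=
  if h0 : (p : ℕ) = 0 then
    if b = 0 then E p xp
    else if b = ρ ⟨0, by omega⟩ + 1 then
      F ((show p = 0 from Fin.ext (by simpa using h0)) ▸ xp)
    else ttA ρ A p (b - 1) xp
  else if hl : (p : ℕ) = n + 1 then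
    if a = 0 then 0
    else if a = ρ ⟨n, by omega⟩ + 1 then E p xp
    else ttB ρ B p (a - 1) xp
  else
    if a = 0 then
      if b = 0 then E p xp
      else if b = ρ ⟨(p : ℕ), by have := p.isLt; omega⟩ + 1 then 0
      else ttA ρ A p (b - 1) xp
    else if a = ρ ⟨(p : ℕ) - 1, by have := p.isLt; omega⟩ + 1 then
      if b = ρ ⟨(p : ℕ), by have := p.isLt; omega⟩ + 1 then E p xp else 0
    else
      if b = ρ ⟨(p : ℕ), by have := p.isLt; omega⟩ + 1 then ttB ρ B p (a - 1) xp else 0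

/-- The state vector, with ℕ-valued arguments. -/
def ttW (E : ∀ k : Fin (n + 2), α k → R) (F : α 0 → R) (ρ : Fin (n + 1) → ℕ)
    (A : ∀ j : Fin (n + 1), Fin (ρ j) → α j.castSucc → R)
    (B : ∀ j : Fin (n + 1), Fin (ρ j) → α j.succ → R) (x : ∀ i, α i) (s b : ℕ) : R :=
  if s = 0 then 1
  else if hs : s ≤ n + 1 then
    if b = 0 then ttP E x 0 s
    else if b = ρ ⟨s - 1, by omega⟩ + 1 then ttD E F ρ A B x s
    else ttP E x 0 (s - 1) * ttA ρ A ⟨s - 1, by omega⟩ (b - 1) (x ⟨s - 1, by omega⟩)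
  else ttD E F ρ A B x (n + 2)

end TTAux

section TTEval

variable {R : Type*} [CommRing R] {n : ℕ} {α : Fin (n + 2) → Type*}
variable (E : ∀ k : Fin (n + 2), α k → R) (F : α 0 → R) (ρ : Fin (n + 1) → ℕ)
    (A : ∀ j : Fin (n + 1), Fin (ρ j) → α j.castSucc → R)
    (B : ∀ j : Fin (n + 1), Fin (ρ j) → α j.succ → R) (x : ∀ i, α i)

lemma ttW_zero (b : ℕ) : ttW E F ρ A B x 0 b = 1 := by
  unfold ttW; rw [if_pos rfl]

lemma ttW_int0 (s : ℕ) (h1 : s ≠ 0) (h2 : s ≤ n + 1) :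
    ttW E F ρ A B x s 0 = ttP E x 0 s := by
  unfold ttW; rw [if_neg h1, dif_pos h2, if_pos rfl]

lemma ttW_intlast (s : ℕ) (j : Fin (n + 1)) (h1 : s ≠ 0) (h2 : s ≤ n + 1)
    (hj : (j : ℕ) = s - 1) :
    ttW E F ρ A B x s (ρ j + 1) = ttD E F ρ A B x s := by
  have hj' : j = (⟨s - 1, by omega⟩ : Fin (n + 1)) := Fin.ext hj
  rw [hj']
  unfold ttW; rw [if_neg h1, dif_pos h2, if_neg (by omega), if_pos rfl]

lemma ttW_intmid (s b : ℕ) (j : Fin (n + 1)) (h1 : s ≠ 0) (h2 : s ≤ n + 1)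
    (hj : (j : ℕ) = s - 1) (hb0 : b ≠ 0) (hbl : b ≠ ρ j + 1) :
    ttW E F ρ A B x s b
      = ttP E x 0 (s - 1) * ttA ρ A ⟨s - 1, by omega⟩ (b - 1) (x ⟨s - 1, by omega⟩) := by
  have hj' : j = (⟨s - 1, by omega⟩ : Fin (n + 1)) := Fin.ext hj
  rw [hj'] at hbl
  unfold ttW; rw [if_neg h1, dif_pos h2, if_neg hb0, if_neg hbl]

lemma ttW_last (s b : ℕ) (h : ¬ s ≤ n + 1) :
    ttW E F ρ A B x s b = ttD E F ρ A B x (n + 2) := by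
  unfold ttW; rw [if_neg (by omega), dif_neg h]

lemma ttG_pos0 (hv : 0 < n + 2) (xp : α ⟨0, hv⟩) (a b : ℕ) :
    ttG E F ρ A B ⟨0, hv⟩ xp a b =
      if b = 0 then E ⟨0, hv⟩ xp
      else if b = ρ ⟨0, by omega⟩ + 1 then
        F ((show (⟨0, hv⟩ : Fin (n + 2)) = 0 from Fin.ext (by simp)) ▸ xp)
      else ttA ρ A ⟨0, hv⟩ (b - 1) xp := by
  unfold ttG
  rw [dif_pos rfl]

lemma ttG_int (u : ℕ) (hv : u + 1 < n + 2) (hne : u + 1 ≠ n + 1) (xp : α ⟨u + 1, hv⟩)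
    (a b : ℕ) :
    ttG E F ρ A B ⟨u + 1, hv⟩ xp a b =
      if a = 0 then
        if b = 0 then E ⟨u + 1, hv⟩ xp
        else if b = ρ ⟨u + 1, by omega⟩ + 1 then 0
        else ttA ρ A ⟨u + 1, hv⟩ (b - 1) xp
      else if a = ρ ⟨u, by omega⟩ + 1 then
        if b = ρ ⟨u + 1, by omega⟩ + 1 then E ⟨u + 1, hv⟩ xp else 0
      else
        if b = ρ ⟨u + 1, by omega⟩ + 1 then ttB ρ B ⟨u + 1, hv⟩ (a - 1) xp else 0 := by
  unfold ttG
  rw [dif_neg (by simp), dif_neg (by simpa using hne)]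
  rfl

lemma ttG_last (hv : n + 1 < n + 2) (xp : α ⟨n + 1, hv⟩) (a b : ℕ) :
    ttG E F ρ A B ⟨n + 1, hv⟩ xp a b =
      if a = 0 then 0
      else if a = ρ ⟨n, by omega⟩ + 1 then E ⟨n + 1, hv⟩ xp
      else ttB ρ B ⟨n + 1, hv⟩ (a - 1) xp := by
  unfold ttG
  rw [dif_neg (by simp), dif_pos rfl]

end TTEval


/-- `f` admits a tensor-train (TT) representation with ranks `r 0, …, r d`
(with `r 0 = r d = 1`): there are cores `G i` such that `f x` equals the `(0,0)`
entry of the matrix product `G 0 (x 0) * ⋯ * G (d-1) (x (d-1))`, written here as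
the sum over all index paths (the boundary indices range over `Fin 1`). -/
def IsTTRep {R : Type*} [CommRing R] {d : ℕ} {α : Fin d → Type*}
    (f : (∀ i, α i) → R) (r : Fin (d + 1) → ℕ) : Prop :=
  r 0 = 1 ∧ r (Fin.last d) = 1 ∧
    ∃ G : ∀ i : Fin d, α i → Matrix (Fin (r i.castSucc)) (Fin (r i.succ)) R,
      ∀ x : ∀ i, α i,
        f x = ∑ β : ∀ j : Fin (d + 1), Fin (r j),
                ∏ i : Fin d, G i (x i) (β i.castSucc) (β i.succ)


/-- **TT ranks of the generalized cascadic sum** (Remark 4.4 of the paper).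
The dimension is `d = n + 2 ≥ 2`; positions are 0-based, and the pair term
indexed by `j : Fin (n + 1)` (NL index `i = j + 2`) acts on the adjacent
positions `j.castSucc`, `j.succ` and is itself a sum of `ρ j` separable
components.  `H` admits a TT representation whose rank at the interior
separator position `s = 1, …, d-1` equals `2 + ρ (s - 1)` (in the 1-based
notation of the paper, the rank at position `i` equals `2 + ρ_{i+1}`). -/
theorem generalized_cascadic_sum_tt_ranks {R : Type*} [CommRing R] (n : ℕ)
    (α : Fin (n + 2) → Type*)
    (E : ∀ k : Fin (n + 2), α k → R) (F : α 0 → R)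
    (ρ : Fin (n + 1) → ℕ) (hρ : ∀ j, 0 < ρ j)
    (A : ∀ j : Fin (n + 1), Fin (ρ j) → α j.castSucc → R)
    (B : ∀ j : Fin (n + 1), Fin (ρ j) → α j.succ → R)
    (H : (∀ i, α i) → R)
    (hH : ∀ x : ∀ i, α i,
      H x = F (x 0) *
              ∏ k ∈ Finset.univ.filter (fun k : Fin (n + 2) => 1 ≤ (k : ℕ)), E k (x k)
          + ∑ j : Fin (n + 1),
              (∏ k ∈ Finset.univ.filter (fun k : Fin (n + 2) => (k : ℕ) < (j : ℕ)), E k (x k))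
              * (∑ β : Fin (ρ j), A j β (x j.castSucc) * B j β (x j.succ))
              * ∏ k ∈ Finset.univ.filter (fun k : Fin (n + 2) => (j : ℕ) + 1 < (k : ℕ)),
                  E k (x k)) :
    IsTTRep H (fun s : Fin (n + 3) =>
      if h : 0 < (s : ℕ) ∧ (s : ℕ) < n + 2
      then 2 + ρ ⟨(s : ℕ) - 1, by omega⟩ else 1) := by
  refine ⟨dif_neg (by simp), dif_neg (by simp), ?_⟩
  set r : Fin (n + 3) → ℕ := fun s : Fin (n + 3) =>
      if h : 0 < (s : ℕ) ∧ (s : ℕ) < n + 2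
      then 2 + ρ ⟨(s : ℕ) - 1, by omega⟩ else 1 with hr
  refine ⟨fun p xp => Matrix.of (fun a b => ttG E F ρ A B p xp a.val b.val), fun x => ?_⟩
  have hrank : ∀ (s : Fin (n + 3)) (h1 : 0 < (s : ℕ)) (h2 : (s : ℕ) < n + 2),
      r s = 2 + ρ ⟨(s : ℕ) - 1, by omega⟩ := fun s h1 h2 => dif_pos ⟨h1, h2⟩
  have hrank1 : ∀ s : Fin (n + 3), ((s : ℕ) = 0 ∨ (s : ℕ) = n + 2) → r s = 1 :=
    fun s h => dif_neg (by rcases h with h | h <;> omega)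
  have hw : ∀ (i : Fin (n + 2)) (b : Fin (r i.succ)),
      ttW E F ρ A B x (i.succ : ℕ) (b : ℕ)
        = ∑ a : Fin (r i.castSucc),
            ttW E F ρ A B x (i.castSucc : ℕ) (a : ℕ) *
              (Matrix.of (fun a b => ttG E F ρ A B i (x i) a.val b.val)) a b := by
    intro i b
    simp only [Matrix.of_apply]
    rcases i with ⟨v, hv⟩
    by_cases h0 : v = 0
    · subst h0
      rw [tt_sum_fin_one (hrank1 _ (Or.inl rfl))]
      show ttW E F ρ A B x (0 + 1) (b : ℕ)
        = ttW E F ρ A B x 0 0 * ttG E F ρ A B ⟨0, hv⟩ (x ⟨0, hv⟩) 0 (b : ℕ)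
      rw [ttW_zero, one_mul, ttG_pos0]
      by_cases hb0 : (b : ℕ) = 0
      · rw [if_pos hb0, hb0, ttW_int0 E F ρ A B x (0 + 1) (by omega) (by omega),
          ttP_succ E x (le_refl 0) (by omega), ttP_empty E x le_rfl, one_mul]
      · by_cases hbl : (b : ℕ) = ρ ⟨0, by omega⟩ + 1
        · rw [if_neg hb0, if_pos hbl, hbl,
            ttW_intlast E F ρ A B x (0 + 1) ⟨0, by omega⟩ (by omega) (by omega) rfl,
            ttD_one]
          rfl
        · rw [if_neg hb0, if_neg hbl,
            ttW_intmid E F ρ A B x (0 + 1) (b : ℕ) ⟨0, by omega⟩ (by omega) (by omega) rfl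
              hb0 hbl]
          rw [show ttP E x 0 (0 + 1 - 1) = 1 from ttP_empty E x (by omega), one_mul]
    · obtain ⟨u, rfl⟩ := Nat.exists_eq_succ_of_ne_zero h0
      by_cases hl : u + 1 = n + 1
      · -- last core
        obtain rfl : n = u := by omega
        rw [tt_sum_fin_split (hrank _ (Nat.succ_pos n) (Nat.lt_succ_self (n + 1)))]
        show ttW E F ρ A B x (n + 1 + 1) (b : ℕ)
          = ttW E F ρ A B x (n + 1) 0 * ttG E F ρ A B ⟨n + 1, hv⟩ (x ⟨n + 1, hv⟩) 0 (b : ℕ)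
            + (∑ c : Fin (ρ ⟨n, Nat.lt_succ_self n⟩),
                ttW E F ρ A B x (n + 1) ((c : ℕ) + 1)
                  * ttG E F ρ A B ⟨n + 1, hv⟩ (x ⟨n + 1, hv⟩) ((c : ℕ) + 1) (b : ℕ))
            + ttW E F ρ A B x (n + 1) (ρ ⟨n, Nat.lt_succ_self n⟩ + 1)
                * ttG E F ρ A B ⟨n + 1, hv⟩ (x ⟨n + 1, hv⟩) (ρ ⟨n, Nat.lt_succ_self n⟩ + 1)
                    (b : ℕ)
        have T0 : ttW E F ρ A B x (n + 1) 0
            * ttG E F ρ A B ⟨n + 1, hv⟩ (x ⟨n + 1, hv⟩) 0 (b : ℕ) = 0 := by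
          rw [ttG_last E F ρ A B hv, if_pos rfl, mul_zero]
        have Tm : ∀ c : Fin (ρ ⟨n, Nat.lt_succ_self n⟩),
            ttW E F ρ A B x (n + 1) ((c : ℕ) + 1)
              * ttG E F ρ A B ⟨n + 1, hv⟩ (x ⟨n + 1, hv⟩) ((c : ℕ) + 1) (b : ℕ)
            = ttP E x 0 n * (A ⟨n, Nat.lt_succ_self n⟩ c (x ⟨n, by omega⟩)
                * B ⟨n, Nat.lt_succ_self n⟩ c (x ⟨n + 1, hv⟩)) := by
          intro c
          rw [ttG_last E F ρ A B hv, if_neg (by omega),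
            if_neg (by have := c.isLt; omega),
            ttW_intmid E F ρ A B x (n + 1) ((c : ℕ) + 1) ⟨n, Nat.lt_succ_self n⟩ (by omega)
              (by omega) rfl (by omega) (by have := c.isLt; omega),
            show ttB ρ B (⟨n + 1, hv⟩ : Fin (n + 2)) ((c : ℕ) + 1 - 1) (x ⟨n + 1, hv⟩)
                = B ⟨n, Nat.lt_succ_self n⟩ c (x ⟨n + 1, hv⟩) from
              ttB_eval ρ B n hv (c : ℕ) c.isLt (x ⟨n + 1, hv⟩),
            show ttA ρ A (⟨n + 1 - 1, by omega⟩ : Fin (n + 2)) ((c : ℕ) + 1 - 1)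
                  (x ⟨n + 1 - 1, by omega⟩)
                = A ⟨n, Nat.lt_succ_self n⟩ c (x ⟨n, by omega⟩) from
              ttA_eval ρ A n (Nat.lt_succ_self n) (c : ℕ) c.isLt (x ⟨n, by omega⟩)]
          rw [show ttP E x 0 (n + 1 - 1) = ttP E x 0 n from rfl]
          ring
        have Tl : ttW E F ρ A B x (n + 1) (ρ ⟨n, Nat.lt_succ_self n⟩ + 1)
            * ttG E F ρ A B ⟨n + 1, hv⟩ (x ⟨n + 1, hv⟩) (ρ ⟨n, Nat.lt_succ_self n⟩ + 1) (b : ℕ)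
            = ttD E F ρ A B x (n + 1) * E ⟨n + 1, hv⟩ (x ⟨n + 1, hv⟩) := by
          rw [ttG_last E F ρ A B hv, if_neg (by omega), if_pos rfl,
            ttW_intlast E F ρ A B x (n + 1) ⟨n, Nat.lt_succ_self n⟩ (by omega) (by omega) rfl]
        rw [ttW_last E F ρ A B x (n + 1 + 1) (b : ℕ) (by omega), T0,
          Finset.sum_congr rfl (fun c _ => Tm c), Tl, zero_add, ← Finset.mul_sum]
        rw [ttD_succ E F ρ A B x (by omega) (le_refl (n + 1))]
        exact add_comm _ _
      · -- interior core
        have hun : u + 1 < n + 1 := by omega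
        rw [tt_sum_fin_split (hrank _ (Nat.succ_pos u) (show u + 1 < n + 2 by omega))]
        show ttW E F ρ A B x (u + 1 + 1) (b : ℕ)
          = ttW E F ρ A B x (u + 1) 0 * ttG E F ρ A B ⟨u + 1, hv⟩ (x ⟨u + 1, hv⟩) 0 (b : ℕ)
            + (∑ c : Fin (ρ ⟨u, by omega⟩),
                ttW E F ρ A B x (u + 1) ((c : ℕ) + 1)
                  * ttG E F ρ A B ⟨u + 1, hv⟩ (x ⟨u + 1, hv⟩) ((c : ℕ) + 1) (b : ℕ))
            + ttW E F ρ A B x (u + 1) (ρ ⟨u, by omega⟩ + 1)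
                * ttG E F ρ A B ⟨u + 1, hv⟩ (x ⟨u + 1, hv⟩) (ρ ⟨u, by omega⟩ + 1) (b : ℕ)
        by_cases hb0 : (b : ℕ) = 0
        · have T0 : ttW E F ρ A B x (u + 1) 0
              * ttG E F ρ A B ⟨u + 1, hv⟩ (x ⟨u + 1, hv⟩) 0 (b : ℕ)
              = ttP E x 0 (u + 1) * E ⟨u + 1, hv⟩ (x ⟨u + 1, hv⟩) := by
            rw [ttG_int E F ρ A B u hv hl, if_pos rfl, if_pos hb0,
              ttW_int0 E F ρ A B x (u + 1) (by omega) (by omega)]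
          have Tm : ∀ c : Fin (ρ ⟨u, by omega⟩),
              ttW E F ρ A B x (u + 1) ((c : ℕ) + 1)
                * ttG E F ρ A B ⟨u + 1, hv⟩ (x ⟨u + 1, hv⟩) ((c : ℕ) + 1) (b : ℕ)
              = 0 := by
            intro c
            rw [ttG_int E F ρ A B u hv hl, if_neg (by omega),
              if_neg (by have := c.isLt; omega), if_neg (by omega), mul_zero]
          have Tl : ttW E F ρ A B x (u + 1) (ρ ⟨u, by omega⟩ + 1)
              * ttG E F ρ A B ⟨u + 1, hv⟩ (x ⟨u + 1, hv⟩) (ρ ⟨u, by omega⟩ + 1) (b : ℕ)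
              = 0 := by
            rw [ttG_int E F ρ A B u hv hl, if_neg (by omega), if_pos rfl, if_neg (by omega),
              mul_zero]
          rw [T0, Finset.sum_congr rfl (fun c _ => Tm c), Tl, Finset.sum_const_zero, add_zero,
            add_zero, hb0, ttW_int0 E F ρ A B x (u + 1 + 1) (by omega) (by omega),
            ttP_succ E x (by omega) (by omega)]
        · by_cases hbl : (b : ℕ) = ρ ⟨u + 1, hun⟩ + 1
          · have T0 : ttW E F ρ A B x (u + 1) 0
                * ttG E F ρ A B ⟨u + 1, hv⟩ (x ⟨u + 1, hv⟩) 0 (b : ℕ) = 0 := by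
              rw [ttG_int E F ρ A B u hv hl, if_pos rfl, if_neg hb0, if_pos hbl, mul_zero]
            have Tm : ∀ c : Fin (ρ ⟨u, by omega⟩),
                ttW E F ρ A B x (u + 1) ((c : ℕ) + 1)
                  * ttG E F ρ A B ⟨u + 1, hv⟩ (x ⟨u + 1, hv⟩) ((c : ℕ) + 1) (b : ℕ)
                = ttP E x 0 u * (A ⟨u, by omega⟩ c (x ⟨u, by omega⟩)
                    * B ⟨u, by omega⟩ c (x ⟨u + 1, hv⟩)) := by
              intro c
              rw [ttG_int E F ρ A B u hv hl, if_neg (by omega),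
                if_neg (by have := c.isLt; omega), if_pos hbl,
                ttW_intmid E F ρ A B x (u + 1) ((c : ℕ) + 1) ⟨u, by omega⟩ (by omega)
                  (by omega) rfl (by omega) (by have := c.isLt; omega),
                show ttB ρ B (⟨u + 1, hv⟩ : Fin (n + 2)) ((c : ℕ) + 1 - 1) (x ⟨u + 1, hv⟩)
                    = B ⟨u, by omega⟩ c (x ⟨u + 1, hv⟩) from
                  ttB_eval ρ B u hv (c : ℕ) c.isLt (x ⟨u + 1, hv⟩),
                show ttA ρ A (⟨u + 1 - 1, by omega⟩ : Fin (n + 2)) ((c : ℕ) + 1 - 1)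
                      (x ⟨u + 1 - 1, by omega⟩)
                    = A ⟨u, by omega⟩ c (x ⟨u, by omega⟩) from
                  ttA_eval ρ A u (by omega) (c : ℕ) c.isLt (x ⟨u, by omega⟩)]
              rw [show ttP E x 0 (u + 1 - 1) = ttP E x 0 u from rfl]
              ring
            have Tl : ttW E F ρ A B x (u + 1) (ρ ⟨u, by omega⟩ + 1)
                * ttG E F ρ A B ⟨u + 1, hv⟩ (x ⟨u + 1, hv⟩) (ρ ⟨u, by omega⟩ + 1) (b : ℕ)
                = ttD E F ρ A B x (u + 1) * E ⟨u + 1, hv⟩ (x ⟨u + 1, hv⟩) := by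
              rw [ttG_int E F ρ A B u hv hl, if_neg (by omega), if_pos rfl, if_pos hbl,
                ttW_intlast E F ρ A B x (u + 1) ⟨u, by omega⟩ (by omega) (by omega) rfl]
            rw [T0, Finset.sum_congr rfl (fun c _ => Tm c), Tl, zero_add, ← Finset.mul_sum,
              hbl, ttW_intlast E F ρ A B x (u + 1 + 1) ⟨u + 1, hun⟩ (by omega) (by omega) rfl]
            rw [ttD_succ E F ρ A B x (by omega) (by omega)]
            exact add_comm _ _
          · have T0 : ttW E F ρ A B x (u + 1) 0
                * ttG E F ρ A B ⟨u + 1, hv⟩ (x ⟨u + 1, hv⟩) 0 (b : ℕ)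
                = ttP E x 0 (u + 1) * ttA ρ A ⟨u + 1, hv⟩ ((b : ℕ) - 1) (x ⟨u + 1, hv⟩) := by
              rw [ttG_int E F ρ A B u hv hl, if_pos rfl, if_neg hb0, if_neg hbl,
                ttW_int0 E F ρ A B x (u + 1) (by omega) (by omega)]
            have Tm : ∀ c : Fin (ρ ⟨u, by omega⟩),
                ttW E F ρ A B x (u + 1) ((c : ℕ) + 1)
                  * ttG E F ρ A B ⟨u + 1, hv⟩ (x ⟨u + 1, hv⟩) ((c : ℕ) + 1) (b : ℕ)
                = 0 := by
              intro c
              rw [ttG_int E F ρ A B u hv hl, if_neg (by omega),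
                if_neg (by have := c.isLt; omega), if_neg hbl, mul_zero]
            have Tl : ttW E F ρ A B x (u + 1) (ρ ⟨u, by omega⟩ + 1)
                * ttG E F ρ A B ⟨u + 1, hv⟩ (x ⟨u + 1, hv⟩) (ρ ⟨u, by omega⟩ + 1) (b : ℕ)
                = 0 := by
              rw [ttG_int E F ρ A B u hv hl, if_neg (by omega), if_pos rfl, if_neg hbl,
                mul_zero]
            rw [T0, Finset.sum_congr rfl (fun c _ => Tm c), Tl, Finset.sum_const_zero,
              add_zero, add_zero,
              ttW_intmid E F ρ A B x (u + 1 + 1) (b : ℕ) ⟨u + 1, hun⟩ (by omega) (by omega)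
                rfl hb0 hbl]
            rfl
  have key := tt_path_sum_invariant (n + 2) r
      (fun i => Matrix.of (fun a b => ttG E F ρ A B i (x i) a.val b.val))
      (fun s b => ttW E F ρ A B x (s : ℕ) (b : ℕ)) hw
  calc H x = ttD E F ρ A B x (n + 2) := by
        rw [hH x]
        unfold ttD ttP
        rw [show Finset.univ.filter (fun j : Fin (n + 1) => (j : ℕ) + 2 ≤ n + 2)
            = (Finset.univ : Finset (Fin (n + 1))) from by
          ext j; have := j.isLt; simp; omega]
        congr 1
        · congr 1
          apply Finset.prod_congr _ (fun k _ => rfl)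
          ext k; have := k.isLt; simp; try omega
        · refine Finset.sum_congr rfl fun j _ => ?_
          congr 1
          · congr 1
            apply Finset.prod_congr _ (fun k _ => rfl)
            ext k; simp
          · apply Finset.prod_congr _ (fun k _ => rfl)
            ext k; have := k.isLt; simp; try omega
    _ = ∑ b : Fin (r (Fin.last (n + 2))),
          ttW E F ρ A B x ((Fin.last (n + 2) : Fin (n + 3)) : ℕ) (b : ℕ) := by
        rw [tt_sum_fin_one (hrank1 _ (Or.inr (by simp)))]
        unfold ttW
        rw [if_neg (by simp), dif_neg (by simp)]
    _ = _ := by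
        rw [← key]
        refine Finset.sum_congr rfl fun β _ => ?_
        have h1 : ∀ c : Fin (r 0), ttW E F ρ A B x (((0 : Fin (n + 3))) : ℕ) (c : ℕ) = 1 := by
          intro c
          unfold ttW
          rw [if_pos (by simp)]
        simp only [Matrix.of_apply]
        rw [h1, one_mul]
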